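/- Let p,q ∈ [1,∞] be Hölder conjugates (1/p + 1/q = 1), let R > 0, and let Λ := {λ ∈ ℝ₊^m : ‖λ‖_p ≤ R}. Suppose μ is a probability distribution on Θ and ν is a probability distribution on Λ (with g₀,…,g_m integrable w.r.t. μ) such that sup_{λ* ∈ Λ} E_{θ∼μ}[ℒ(θ,λ*)] − inf_{θ* ∈ Θ} E_{λ∼ν}[ℒ(θ*,λ)] ≤ ε, i.e. (μ,ν) is an ε-approximate mixed Nash equilibrium of the Lagrangian game. Then: (i) E_{θ∼μ}[g₀(θ)] ≤ inf{g₀(θ*) : θ* ∈ Θ, g_i(θ*) ≤ 0 for all i ∈ {1,…,m}} + ε; and (ii) if λ̄ := E_{λ∼ν}[λ] satisfies ‖λ̄‖_p < R, then ‖(E_{θ∼μ}[g(θ)])₊‖_q ≤ ε/(R − ‖λ̄‖_p), where g(θ) := (g₁(θ),…,g_m(θ)) ∈ ℝ^m and (·)₊ takes coordinatewise positive parts. -/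

import Mathlib

open MeasureTheory

/-- The `p`-norm of a vector in `Fin m → ℝ`, for `p ∈ [1,∞]` (an extended
nonnegative real).  For `p = ∞` it is the maximum absolute coordinate, and for
`p < ∞` it is `(∑ i, |x i| ^ p)^(1/p)`. -/
noncomputable def pNorm {m : ℕ} (p : ENNReal) (x : Fin m → ℝ) : ℝ :=
  if p = ⊤ then ⨆ i, |x i| else (∑ i, |x i| ^ p.toReal) ^ (1 / p.toReal)

lemma pNorm_eq_norm {m : ℕ} (p : ENNReal) (hp : 1 ≤ p) (x : Fin m → ℝ) :
    pNorm p x = @norm (PiLp p fun _ : Fin m => ℝ)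
      (haveI : Fact (1 ≤ p) := ⟨hp⟩; inferInstance) ((WithLp.equiv p (Fin m → ℝ)).symm x) := by
  haveI : Fact (1 ≤ p) := ⟨hp⟩
  unfold pNorm
  by_cases hpt : p = ⊤
  · subst hpt; simp [PiLp.norm_eq_ciSup, Real.norm_eq_abs, PiLp.toLp_apply]
  · have hpos : 0 < p.toReal := ENNReal.toReal_pos (zero_lt_one.trans_le hp).ne' hpt
    rw [if_neg hpt, PiLp.norm_eq_sum hpos]
    simp [Real.norm_eq_abs, PiLp.toLp_apply]

lemma pNorm_nonneg {m : ℕ} (p : ENNReal) (hp : 1 ≤ p) (x : Fin m → ℝ) :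
    0 ≤ pNorm p x := by
  haveI : Fact (1 ≤ p) := ⟨hp⟩
  rw [pNorm_eq_norm p hp]; exact norm_nonneg _

lemma pNorm_add_le {m : ℕ} (p : ENNReal) (hp : 1 ≤ p) (x y : Fin m → ℝ) :
    pNorm p (fun i => x i + y i) ≤ pNorm p x + pNorm p y := by
  haveI : Fact (1 ≤ p) := ⟨hp⟩
  rw [pNorm_eq_norm p hp, pNorm_eq_norm p hp, pNorm_eq_norm p hp]
  exact norm_add_le ((WithLp.equiv p (Fin m → ℝ)).symm x) ((WithLp.equiv p (Fin m → ℝ)).symm y)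

lemma pNorm_smul {m : ℕ} (p : ENNReal) (hp : 1 ≤ p) (c : ℝ) (x : Fin m → ℝ) :
    pNorm p (fun i => c * x i) = |c| * pNorm p x := by
  haveI : Fact (1 ≤ p) := ⟨hp⟩
  rw [pNorm_eq_norm p hp, pNorm_eq_norm p hp]
  have : (WithLp.equiv p (Fin m → ℝ)).symm (fun i => c * x i)
      = c • (WithLp.equiv p (Fin m → ℝ)).symm x := rfl
  rw [this, norm_smul, Real.norm_eq_abs]

lemma pNorm_zero {m : ℕ} (p : ENNReal) (hp : 1 ≤ p) :
    pNorm p (fun _ : Fin m => (0:ℝ)) = 0 := by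
  haveI : Fact (1 ≤ p) := ⟨hp⟩
  rw [pNorm_eq_norm p hp]
  have : (WithLp.equiv p (Fin m → ℝ)).symm (fun _ => (0:ℝ)) = 0 := rfl
  rw [this, norm_zero]

lemma pNorm_duality {m : ℕ} (p q : ENNReal) (hp : 1 ≤ p) (hq : 1 ≤ q)
    (hpq : 1 / p + 1 / q = 1) (u : Fin m → ℝ) (hu : ∀ i, 0 ≤ u i) :
    ∃ w : Fin m → ℝ, (∀ i, 0 ≤ w i) ∧ pNorm p w ≤ 1 ∧ (∀ i, u i = 0 → w i = 0) ∧
      pNorm q u ≤ ∑ i, w i * u i := by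
  by_cases hqt : q = ⊤
  · -- q = ∞, p = 1
    have hp1 : p = 1 := by
      have h1 : 1 / p = 1 := by simpa [hqt] using hpq
      rw [one_div] at h1
      simpa using congrArg (·⁻¹) h1
    subst hp1; subst hqt
    have hsup : pNorm ⊤ u = ⨆ i, |u i| := by simp [pNorm]
    rcases Nat.eq_zero_or_pos m with hm | hm
    · refine ⟨fun _ => 0, fun i => le_rfl, ?_, fun i _ => rfl, ?_⟩
      · rw [pNorm_zero 1 le_rfl]; exact zero_le_one
      · subst hm
        rw [hsup]
        simp [Real.iSup_of_isEmpty]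
    · haveI : Nonempty (Fin m) := ⟨⟨0, hm⟩⟩
      obtain ⟨i0, hi0⟩ := Finite.exists_max u
      have hsup' : pNorm ⊤ u = u i0 := by
        rw [hsup]
        apply le_antisymm
        · exact ciSup_le fun i => by rw [abs_of_nonneg (hu i)]; exact hi0 i
        · calc u i0 = |u i0| := (abs_of_nonneg (hu i0)).symm
            _ ≤ ⨆ i, |u i| := le_ciSup (f := fun i => |u i|) (Set.Finite.bddAbove (Set.finite_range _)) i0
      by_cases h0 : u i0 = 0
      · refine ⟨fun _ => 0, fun i => le_rfl, ?_, fun i _ => rfl, ?_⟩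
        · rw [pNorm_zero 1 le_rfl]; exact zero_le_one
        · rw [hsup', h0]; simp
      · refine ⟨fun i => if i = i0 then 1 else 0, fun i => by positivity, ?_, ?_, ?_⟩
        · have habs : ∀ x : Fin m, |if x = i0 then (1:ℝ) else 0| = if x = i0 then 1 else 0 :=
            fun x => by split <;> simp
          have hsum : ∑ x : Fin m, |if x = i0 then (1:ℝ) else 0| = 1 := by
            rw [Finset.sum_congr rfl (fun x _ => habs x)]
            simp [Finset.sum_ite_eq']
          have : pNorm 1 (fun i => if i = i0 then (1:ℝ) else 0) = 1 := by
            simp only [pNorm, if_neg (by simp : (1:ENNReal) ≠ ⊤), ENNReal.toReal_one,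
              Real.rpow_one, hsum, Real.one_rpow]
          rw [this]
        · intro i hi
          by_cases h : i = i0
          · exact absurd (h ▸ hi) h0
          · simp [h]
        · rw [hsup']
          rw [Finset.sum_eq_single i0 (fun b _ hb => by simp [hb]) (by simp)]
          simp
  · by_cases hpt : p = ⊤
    · -- p = ∞, q = 1
      have hq1 : q = 1 := by
        have h1 : 1 / q = 1 := by simpa [hpt] using hpq
        rw [one_div] at h1
        simpa using congrArg (·⁻¹) h1
      subst hq1; subst hpt
      refine ⟨fun i => if 0 < u i then 1 else 0, fun i => by positivity, ?_, ?_, ?_⟩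
      · rw [pNorm, if_pos rfl]
        refine Real.iSup_le (fun i => ?_) zero_le_one
        split <;> simp
      · intro i hi; simp [hi]
      · have : pNorm 1 u = ∑ i, u i := by
          simp [pNorm, abs_of_nonneg, hu]
        rw [this]
        apply le_of_eq
        refine (Finset.sum_congr rfl fun i _ => ?_).symm
        by_cases h : 0 < u i
        · simp [h]
        · have : u i = 0 := le_antisymm (not_lt.mp h) (hu i)
          simp [this]
    · -- both finite
      have hpne0 : p ≠ 0 := (zero_lt_one.trans_le hp).ne'
      have hqne0 : q ≠ 0 := (zero_lt_one.trans_le hq).ne'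
      set pr := p.toReal with hpr
      set qr := q.toReal with hqr
      have hpr1 : 1 ≤ pr := by
        simpa using ENNReal.toReal_mono hpt hp
      have hqr1 : 1 ≤ qr := by
        simpa using ENNReal.toReal_mono hqt hq
      have hpr0 : 0 < pr := zero_lt_one.trans_le hpr1
      have hqr0 : 0 < qr := zero_lt_one.trans_le hqr1
      have h1 : 1 / pr + 1 / qr = 1 := by
        have := congrArg ENNReal.toReal hpq
        rwa [ENNReal.toReal_add (by simp [ENNReal.div_eq_top, hpne0])
          (by simp [ENNReal.div_eq_top, hqne0]), ENNReal.toReal_div, ENNReal.toReal_div,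
          ENNReal.toReal_one] at this
      have hqrgt1 : 1 < qr := by
        have hplt : 0 < 1 / pr := by positivity
        have : 1 / qr < 1 := by linarith
        exact (div_lt_one hqr0).mp this
      have hkey : (qr - 1) * pr = qr := by
        field_simp at h1
        nlinarith [h1]
      set S := ∑ i, u i ^ qr with hS
      have hSnn : 0 ≤ S := Finset.sum_nonneg fun i _ => Real.rpow_nonneg (hu i) _
      have hqnorm : pNorm q u = S ^ (1 / qr) := by
        simp only [pNorm, if_neg hqt]
        congr 1
        exact Finset.sum_congr rfl fun i _ => by rw [abs_of_nonneg (hu i)]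
      rcases eq_or_lt_of_le hSnn with hS0 | hSpos
      · refine ⟨fun _ => 0, fun i => le_rfl, ?_, fun i _ => rfl, ?_⟩
        · rw [pNorm_zero p hp]; exact zero_le_one
        · rw [hqnorm, ← hS0, Real.zero_rpow (by positivity)]
          simp
      · set N := S ^ (1 / qr) with hN
        have hNpos : 0 < N := Real.rpow_pos_of_pos hSpos _
        have hNq : N ^ qr = S := by
          rw [hN, ← Real.rpow_mul hSnn, one_div_mul_cancel hqr0.ne', Real.rpow_one]
        have hq1ne : qr - 1 ≠ 0 := sub_ne_zero.mpr hqrgt1.ne'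
        refine ⟨fun i => u i ^ (qr - 1) / N ^ (qr - 1), ?_, ?_, ?_, ?_⟩
        · intro i
          exact div_nonneg (Real.rpow_nonneg (hu i) _) (Real.rpow_nonneg hNpos.le _)
        · have hw : ∀ i : Fin m, |u i ^ (qr - 1) / N ^ (qr - 1)| ^ pr = u i ^ qr / S := by
            intro i
            rw [abs_of_nonneg (div_nonneg (Real.rpow_nonneg (hu i) _)
              (Real.rpow_nonneg hNpos.le _)),
              Real.div_rpow (Real.rpow_nonneg (hu i) _) (Real.rpow_nonneg hNpos.le _),
              ← Real.rpow_mul (hu i), ← Real.rpow_mul hNpos.le, hkey, hNq]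
          have : pNorm p (fun i => u i ^ (qr - 1) / N ^ (qr - 1)) = 1 := by
            simp only [pNorm, if_neg hpt]
            rw [Finset.sum_congr rfl (fun i _ => hw i), ← Finset.sum_div, ← hS,
              div_self hSpos.ne', Real.one_rpow]
          rw [this]
        · intro i hi
          dsimp only
          rw [hi, Real.zero_rpow hq1ne, zero_div]
        · have hterm : ∀ i : Fin m, u i ^ (qr - 1) / N ^ (qr - 1) * u i
              = u i ^ qr / N ^ (qr - 1) := by
            intro i
            rcases eq_or_lt_of_le (hu i) with h0 | hpos
            · simp [← h0, Real.zero_rpow hq1ne, Real.zero_rpow hqr0.ne']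
            · rw [div_mul_eq_mul_div]
              congr 1
              rw [← Real.rpow_add_one hpos.ne', show qr - 1 + 1 = qr by ring]
          rw [Finset.sum_congr rfl (fun i _ => hterm i), ← Finset.sum_div, ← hS, hqnorm]
          have hNq1pos : 0 < N ^ (qr - 1) := Real.rpow_pos_of_pos hNpos _
          have hmul : N * N ^ (qr - 1) = S := by
            have h2 := Real.rpow_add hNpos 1 (qr - 1)
            rw [Real.rpow_one] at h2
            rw [← h2, show (1:ℝ) + (qr - 1) = qr by ring, hNq]
          exact le_of_eq (by rw [← hmul, mul_div_cancel_right₀ _ hNq1pos.ne'])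

/-- **Lagrangian sub{optimality,feasibility}** (Theorem 2 / Theorem B.1).
If `(μ, ν)` is an `ε`-approximate mixed Nash equilibrium of the Lagrangian game
with multiplier set `Λ = {λ ∈ ℝ₊^m : ‖λ‖_p ≤ R}`, then `μ` is `ε`-suboptimal
relative to every feasible point, and if `λ̄ := E_ν[λ]` has `‖λ̄‖_p < R` then the
`q`-norm of the vector of expected constraint violations is at most
`ε / (R − ‖λ̄‖_p)`. -/
theorem lagrangian_suboptimality_and_feasibility
    {Θ : Type*} [MeasurableSpace Θ] {m : ℕ}
    (p q : ENNReal) (hp : 1 ≤ p) (hq : 1 ≤ q) (hpq : 1 / p + 1 / q = 1)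
    (R ε : ℝ) (hR : 0 < R)
    (g0 : Θ → ℝ) (g : Fin m → Θ → ℝ)
    (L : Θ → (Fin m → ℝ) → ℝ)
    (hL : ∀ θ l, L θ l = g0 θ + ∑ i, l i * g i θ)
    (Λ : Set (Fin m → ℝ))
    (hΛ : Λ = {l | (∀ i, 0 ≤ l i) ∧ pNorm p l ≤ R})
    (μ : Measure Θ) [IsProbabilityMeasure μ]
    (ν : Measure (Fin m → ℝ)) [IsProbabilityMeasure ν]
    (hν : ∀ᵐ l ∂ν, l ∈ Λ)
    (hg0int : Integrable g0 μ) (hgint : ∀ i, Integrable (g i) μ)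
    (hLν : ∀ θ' : Θ, Integrable (fun l => L θ' l) ν)
    (hlint : Integrable (fun l => l) ν)
    -- `(μ, ν)` is an `ε`-approximate mixed Nash equilibrium:
    -- `sup_{λ* ∈ Λ} E_θ[L(θ, λ*)] − inf_{θ*} E_λ[L(θ*, λ)] ≤ ε`
    (hNash : ∀ l ∈ Λ, ∀ θ' : Θ, (∫ θ, L θ l ∂μ) - (∫ l', L θ' l' ∂ν) ≤ ε) :
    -- near-optimality
    (∀ θ' : Θ, (∀ i, g i θ' ≤ 0) → (∫ θ, g0 θ ∂μ) ≤ g0 θ' + ε) ∧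
    -- near-feasibility
    (pNorm p (∫ l, l ∂ν) < R →
      pNorm q (fun i => max (∫ θ, g i θ ∂μ) 0)
        ≤ ε / (R - pNorm p (∫ l, l ∂ν))) := by
  classical
  set lb : Fin m → ℝ := ∫ l, l ∂ν with hlb
  have hcomp : ∀ i : Fin m, Integrable (fun l : Fin m → ℝ => l i) ν := fun i =>
    (ContinuousLinearMap.proj (R := ℝ) (φ := fun _ : Fin m => ℝ) i).integrable_comp hlint
  have hlb_comp : ∀ i, lb i = ∫ l, l i ∂ν := fun i => by
    rw [hlb]
    exact (ContinuousLinearMap.integral_comp_comm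
      (ContinuousLinearMap.proj (R := ℝ) (φ := fun _ : Fin m => ℝ) i) hlint).symm
  have hlbnn : ∀ i, 0 ≤ lb i := fun i => by
    rw [hlb_comp i]
    apply integral_nonneg_of_ae
    filter_upwards [hν] with l hl
    rw [hΛ] at hl; exact hl.1 i
  have hA : ∀ l : Fin m → ℝ,
      (∫ θ, L θ l ∂μ) = (∫ θ, g0 θ ∂μ) + ∑ i, l i * (∫ θ, g i θ ∂μ) := by
    intro l
    simp only [hL]
    rw [integral_add hg0int
      (integrable_finset_sum _ fun i _ => (hgint i).const_mul (l i)),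
      integral_finset_sum _ fun i _ => (hgint i).const_mul (l i)]
    congr 1
    exact Finset.sum_congr rfl fun i _ => integral_const_mul _ _
  have hB : ∀ θ' : Θ, (∫ l', L θ' l' ∂ν) = g0 θ' + ∑ i, lb i * g i θ' := by
    intro θ'
    simp only [hL]
    rw [integral_add (integrable_const _)
      (integrable_finset_sum _ fun i _ => (hcomp i).mul_const (g i θ')),
      integral_finset_sum _ fun i _ => (hcomp i).mul_const (g i θ'),
      integral_const]
    simp only [probReal_univ, one_smul]
    congr 1
    exact Finset.sum_congr rfl fun i _ => by rw [integral_mul_const, ← hlb_comp i]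
  have hNash' : ∀ l ∈ Λ, ∀ θ' : Θ,
      ((∫ θ, g0 θ ∂μ) + ∑ i, l i * (∫ θ, g i θ ∂μ))
        - (g0 θ' + ∑ i, lb i * g i θ') ≤ ε := by
    intro l hl θ'
    rw [← hA l, ← hB θ']
    exact hNash l hl θ'
  constructor
  · intro θ' hθ'
    have h0Λ : (fun _ : Fin m => (0:ℝ)) ∈ Λ := by
      rw [hΛ]
      exact ⟨fun i => le_rfl, by rw [pNorm_zero p hp]; exact hR.le⟩
    have hN := hNash' _ h0Λ θ'
    simp only [zero_mul, Finset.sum_const_zero, add_zero] at hN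
    have hsum : ∑ i, lb i * g i θ' ≤ 0 := by
      refine Finset.sum_nonpos fun i _ => ?_
      have := mul_le_mul_of_nonneg_left (hθ' i) (hlbnn i)
      simpa using this
    linarith
  · intro hlt
    set d := R - pNorm p lb with hd
    have hdpos : 0 < d := sub_pos.mpr hlt
    have hfint : Integrable (fun θ => g0 θ + ∑ i, lb i * g i θ) μ :=
      hg0int.add (integrable_finset_sum _ fun i _ => (hgint i).const_mul _)
    obtain ⟨θ0, hθ0⟩ := exists_le_integral hfint
    have hθ0' : g0 θ0 + ∑ i, lb i * g i θ0
        ≤ (∫ θ, g0 θ ∂μ) + ∑ i, lb i * (∫ θ, g i θ ∂μ) := by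
      refine hθ0.trans_eq ?_
      rw [integral_add hg0int (integrable_finset_sum _ fun i _ => (hgint i).const_mul _),
        integral_finset_sum _ fun i _ => (hgint i).const_mul _]
      congr 1
      exact Finset.sum_congr rfl fun i _ => integral_const_mul _ _
    obtain ⟨w, hwnn, hwnorm, hw0, hwdual⟩ := pNorm_duality p q hp hq hpq
      (fun i => max (∫ θ, g i θ ∂μ) 0) (fun i => le_max_right _ _)
    have hwv : ∀ i, w i * max (∫ θ, g i θ ∂μ) 0 = w i * (∫ θ, g i θ ∂μ) := by
      intro i
      rcases le_or_gt (∫ θ, g i θ ∂μ) 0 with h | h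
      · rw [max_eq_right h, hw0 i (max_eq_right h), zero_mul, zero_mul]
      · rw [max_eq_left h.le]
    set ls : Fin m → ℝ := fun i => lb i + d * w i with hls
    have hlsΛ : ls ∈ Λ := by
      rw [hΛ]
      refine ⟨fun i => add_nonneg (hlbnn i) (mul_nonneg hdpos.le (hwnn i)), ?_⟩
      calc pNorm p ls ≤ pNorm p lb + pNorm p (fun i => d * w i) := pNorm_add_le p hp _ _
        _ = pNorm p lb + |d| * pNorm p w := by rw [pNorm_smul p hp]
        _ ≤ pNorm p lb + d * 1 := by
            rw [abs_of_nonneg hdpos.le]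
            have := mul_le_mul_of_nonneg_left hwnorm hdpos.le
            linarith
        _ = R := by rw [mul_one, hd]; ring
    have hN := hNash' ls hlsΛ θ0
    have hsum : ∑ i, ls i * (∫ θ, g i θ ∂μ)
        = ∑ i, lb i * (∫ θ, g i θ ∂μ) + d * ∑ i, w i * (∫ θ, g i θ ∂μ) := by
      rw [Finset.mul_sum, ← Finset.sum_add_distrib]
      exact Finset.sum_congr rfl fun i _ => by rw [hls]; ring
    have hkey2 : d * ∑ i, w i * (∫ θ, g i θ ∂μ) ≤ ε := by linarith
    have hfinal : pNorm q (fun i => max (∫ θ, g i θ ∂μ) 0)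
        ≤ ∑ i, w i * (∫ θ, g i θ ∂μ) :=
      hwdual.trans (le_of_eq (Finset.sum_congr rfl fun i _ => hwv i))
    rw [le_div_iff₀ hdpos]
    calc pNorm q (fun i => max (∫ θ, g i θ ∂μ) 0) * d
        = d * pNorm q (fun i => max (∫ θ, g i θ ∂μ) 0) := mul_comm _ _
      _ ≤ d * ∑ i, w i * (∫ θ, g i θ ∂μ) := mul_le_mul_of_nonneg_left hfinal hdpos.le
      _ ≤ ε := hkey2
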